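/- Let F be a field and let q_1,…,q_n be nonzero elements of F that are pairwise distinct and satisfy q_i q_j ≠ 1 for all i ≠ j; let χ_1,…,χ_n ∈ F and ħ ∈ F. Let A(χ) be the n×n matrix with A(χ)_{ii} = χ_i and A(χ)_{ij} = ħ(1 − q_i)(1 + q_j)/((1 − q_i/q_j)(1 − q_i q_j)) for i ≠ j. Then det(A(χ)) equals the sum, over all permutations σ of {1,…,n} all of whose nontrivial cycles have even length (equivalently, every part of the cycle type of σ is even), of sign(σ)·∏_{i=1}^n A(χ)_{i,σ(i)}. -/

import Mathlib

open Equiv Equiv.Perm Finset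

theorem Equiv.Perm.apply_inv_self {α : Type*} (f : Perm α) (x : α) : f (f⁻¹ x) = x :=
  f.apply_symm_apply x

theorem Equiv.Perm.inv_apply_self {α : Type*} (f : Perm α) (x : α) : f⁻¹ (f x) = x :=
  f.symm_apply_apply x

section
variable {α : Type*} [Fintype α] [DecidableEq α]

private lemma flip_lemma (σ : Perm α) (x : α) (hx : σ x ≠ x) :
    (∀ y ∈ (σ.cycleOf x).support, (σ * (σ.cycleOf x)⁻¹ * (σ.cycleOf x)⁻¹) y = σ⁻¹ y) ∧
    (∀ y ∉ (σ.cycleOf x).support, (σ * (σ.cycleOf x)⁻¹ * (σ.cycleOf x)⁻¹) y = σ y) ∧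
    (∀ y, (σ * (σ.cycleOf x)⁻¹ * (σ.cycleOf x)⁻¹).cycleOf y =
      if y ∈ (σ.cycleOf x).support then (σ.cycleOf x)⁻¹ else σ.cycleOf y) ∧
    (σ.cycleOf x).support.card ∈ (σ * (σ.cycleOf x)⁻¹ * (σ.cycleOf x)⁻¹).cycleType := by
  classical
  set c := σ.cycleOf x with hc
  set d := σ * c⁻¹ with hd
  have hcmem : c ∈ σ.cycleFactorsFinset := cycleOf_mem_cycleFactorsFinset_iff.mpr (mem_support.mpr hx)
  have hcyc : c.IsCycle := isCycle_cycleOf σ hx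
  have hdisj : Perm.Disjoint d c := disjoint_mul_inv_of_mem_cycleFactorsFinset hcmem
  have hσ' : σ * c⁻¹ * c⁻¹ = d * c⁻¹ := by rw [hd]
  have hσdc : σ = d * c := by rw [hd]; group
  -- pointwise facts
  have hdc : ∀ y ∈ c.support, d y = y := by
    intro y hy
    rcases hdisj y with h | h
    · exact h
    · exact absurd h (mem_support.mp hy)
  have hmem1 : ∀ y ∈ c.support, (σ * c⁻¹ * c⁻¹) y = σ⁻¹ y := by
    intro y hy
    have h1 : c⁻¹ y ∈ c.support := by
      rw [← Perm.support_inv c, Perm.apply_mem_support, Perm.support_inv]; exact hy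
    have hσinv : σ⁻¹ = c⁻¹ * d⁻¹ := by rw [hσdc, mul_inv_rev]
    rw [hσ', hσinv]
    simp only [Perm.mul_apply]
    rw [hdc _ h1]
    have : d⁻¹ y = y := Perm.inv_eq_iff_eq.mpr (hdc y hy).symm
    rw [this]
  have hmem2 : ∀ y ∉ c.support, (σ * c⁻¹ * c⁻¹) y = σ y := by
    intro y hy
    have h0 : c y = y := notMem_support.mp hy
    have h1 : c⁻¹ y = y := Perm.inv_eq_iff_eq.mpr h0.symm
    rw [hσ', hσdc]
    simp only [Perm.mul_apply, h1, h0]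
  -- factorization of σ' = d * c⁻¹
  have hdisj' : Perm.Disjoint d c⁻¹ := hdisj.inv_right
  have hfacts' : (σ * c⁻¹ * c⁻¹).cycleFactorsFinset =
      d.cycleFactorsFinset ∪ {c⁻¹} := by
    rw [hσ', hdisj'.cycleFactorsFinset_mul_eq_union,
      hcyc.inv.cycleFactorsFinset_eq_singleton]
  have hfacts : σ.cycleFactorsFinset = d.cycleFactorsFinset ∪ {c} := by
    rw [hσdc, hdisj.cycleFactorsFinset_mul_eq_union,
      hcyc.cycleFactorsFinset_eq_singleton]
  have hcinvmem : c⁻¹ ∈ (σ * c⁻¹ * c⁻¹).cycleFactorsFinset := by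
    rw [hfacts']; exact Finset.mem_union_right _ (Finset.mem_singleton_self _)
  refine ⟨hmem1, hmem2, ?_, ?_⟩
  · intro y
    by_cases hy : y ∈ c.support
    · rw [if_pos hy]
      exact (cycle_is_cycleOf (by rwa [Perm.support_inv]) hcinvmem).symm
    · rw [if_neg hy]
      by_cases hdy : d y = y
      · have h1 : σ y = y := by
          rw [hσdc]; simp only [Perm.mul_apply, notMem_support.mp hy, hdy]
        have h2 : (σ * c⁻¹ * c⁻¹) y = y := by rw [hmem2 y hy, h1]
        rw [cycleOf_eq_one_iff _ |>.mpr h2, cycleOf_eq_one_iff _ |>.mpr h1]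
      · have hdmem : d.cycleOf y ∈ d.cycleFactorsFinset :=
          cycleOf_mem_cycleFactorsFinset_iff.mpr (mem_support.mpr hdy)
        have hysupp : y ∈ (d.cycleOf y).support :=
          mem_support_cycleOf_iff.mpr ⟨Perm.SameCycle.refl _ _, mem_support.mpr hdy⟩
        have e1 : d.cycleOf y = σ.cycleOf y := by
          apply cycle_is_cycleOf hysupp
          rw [hfacts]; exact Finset.mem_union_left _ hdmem
        have e2 : d.cycleOf y = (σ * c⁻¹ * c⁻¹).cycleOf y := by
          apply cycle_is_cycleOf hysupp
          rw [hfacts']; exact Finset.mem_union_left _ hdmem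
        rw [← e1, ← e2]
  · rw [cycleType_def, hfacts']
    refine Multiset.mem_map.mpr ⟨c⁻¹, ?_, ?_⟩
    · exact Finset.mem_def.mp (Finset.mem_union_right _ (Finset.mem_singleton_self _))
    · simp [Perm.support_inv]

private def badPts (σ : Perm α) : Finset α :=
  Finset.univ.filter fun y => σ y ≠ y ∧ Odd ((σ.cycleOf y).support.card)

private lemma mem_badPts {σ : Perm α} {y : α} :
    y ∈ badPts σ ↔ σ y ≠ y ∧ Odd ((σ.cycleOf y).support.card) := by
  simp [badPts]

private lemma badPts_nonempty {σ : Perm α} (h : ¬ ∀ k ∈ σ.cycleType, Even k) :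
    (badPts σ).Nonempty := by
  push_neg at h
  obtain ⟨k, hk, hke⟩ := h
  rw [cycleType_def, Multiset.mem_map] at hk
  obtain ⟨cy, hcy, hcard⟩ := hk
  have hcy' : cy ∈ σ.cycleFactorsFinset := hcy
  have hcyc : cy.IsCycle := (mem_cycleFactorsFinset_iff.mp hcy').1
  obtain ⟨y, hy⟩ := hcyc.nonempty_support
  refine ⟨y, mem_badPts.mpr ⟨?_, ?_⟩⟩
  · exact mem_support.mp (mem_cycleFactorsFinset_support_le hcy' hy)
  · rw [← cycle_is_cycleOf hy hcy']
    rw [Nat.not_even_iff_odd] at hke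
    have : cy.support.card = k := hcard
    rw [this]
    exact hke

private lemma badPts_flip (σ : Perm α) (x : α) (hx : σ x ≠ x) :
    badPts (σ * (σ.cycleOf x)⁻¹ * (σ.cycleOf x)⁻¹) = badPts σ := by
  obtain ⟨h1, h2, h3, _⟩ := flip_lemma σ x hx
  ext y
  simp only [mem_badPts]
  by_cases hy : y ∈ (σ.cycleOf x).support
  · have hyσ : σ y ≠ y :=
      mem_support.mp (support_cycleOf_le σ x hy)
    have hyσ' : σ⁻¹ y ≠ y := fun h => hyσ (by conv_lhs => rw [← h]; rw [Perm.apply_inv_self])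
    rw [h1 y hy, h3 y, if_pos hy, ← cycle_is_cycleOf hy
      (cycleOf_mem_cycleFactorsFinset_iff.mpr (mem_support.mpr hx))]
    simp only [Perm.support_inv]
    constructor
    · rintro ⟨-, h⟩; exact ⟨hyσ, h⟩
    · rintro ⟨-, h⟩; exact ⟨hyσ', h⟩
  · rw [h2 y hy, h3 y, if_neg hy]

end

private lemma min'_congr' {β : Type*} [LinearOrder β] {s t : Finset β} (h : s = t)
    (hs : s.Nonempty) (ht : t.Nonempty) : s.min' hs = t.min' ht := by subst h; rfl

/-- Over a field `F`, with `q i` nonzero, pairwise distinct and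
`q i * q j ≠ 1` for `i ≠ j`, the determinant of the matrix `A(χ)` (diagonal `χ i`,
off-diagonal `ℏ (1 - q i)(1 + q j) / ((1 - q i / q j)(1 - q i q j))`) equals the sum,
over the permutations `σ` all of whose nontrivial cycles have even length (i.e. every
entry of the cycle type of `σ` is even), of `sign σ * ∏ i, A(χ) i (σ i)`. -/
theorem det_A_eq_sum_even_cycle_perms {F : Type*} [Field F] (n : ℕ)
    (q χ : Fin n → F) (ℏ : F)
    (hq0 : ∀ i, q i ≠ 0) (hq : Function.Injective q)
    (hq1 : ∀ i j, i ≠ j → q i * q j ≠ 1)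
    (A : Matrix (Fin n) (Fin n) F)
    (hA : A = Matrix.of fun i j : Fin n =>
      if i = j then χ i
      else ℏ * (1 - q i) * (1 + q j) / ((1 - q i / q j) * (1 - q i * q j))) :
    A.det =
    ∑ σ ∈ Finset.univ.filter
        (fun σ : Equiv.Perm (Fin n) => ∀ c ∈ σ.cycleType, Even c),
      ((Equiv.Perm.sign σ : ℤ) : F) * ∏ i : Fin n, A i (σ i) := by
  classical
  -- entry facts
  have hoff : ∀ i j : Fin n, i ≠ j → A i j =
      ℏ * (1 - q i) * (1 + q j) / ((1 - q i / q j) * (1 - q i * q j)) := by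
    intro i j hij; rw [hA]; simp [Matrix.of_apply, hij]
  have hzero1 : ∀ i j : Fin n, i ≠ j → q i = 1 → A i j = 0 := by
    intro i j hij h1; rw [hoff i j hij, h1]; simp
  have hzero2 : ∀ i j : Fin n, i ≠ j → q j = -1 → A i j = 0 := by
    intro i j hij h1; rw [hoff i j hij, h1]; simp
  have hskew : ∀ i j : Fin n, i ≠ j →
      A i j * ((1 - q j) * (q i * (1 + q i))) =
        -(A j i * ((1 - q i) * (q j * (1 + q j)))) := by
    intro i j hij
    have hqi := hq0 i
    have hqj := hq0 j
    have hne : q i ≠ q j := fun h => hij (hq h)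
    have hd1 : (1 : F) - q i / q j ≠ 0 := by
      rw [sub_ne_zero]
      intro h
      exact hne (by field_simp at h; exact h.symm)
    have hd2 : (1 : F) - q j / q i ≠ 0 := by
      rw [sub_ne_zero]
      intro h
      exact hne (by field_simp at h; exact h)
    have hd3 : (1 : F) - q i * q j ≠ 0 := by
      rw [sub_ne_zero]
      exact fun h => hq1 i j hij h.symm
    have hd4 : (1 : F) - q j * q i ≠ 0 := by
      rw [mul_comm]; exact hd3
    have hd5 : q j - q i ≠ 0 := sub_ne_zero.mpr (Ne.symm hne)
    have hd6 : q i - q j ≠ 0 := sub_ne_zero.mpr hne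
    have hoff' : ∀ a b : Fin n, a ≠ b → A a b =
        ℏ * (1 - q a) * (1 + q b) * q b / ((q b - q a) * (1 - q a * q b)) := by
      intro a b hab
      have hb := hq0 b
      have hd1' : (1 : F) - q a / q b ≠ 0 := by
        rw [sub_ne_zero]
        intro h
        apply hab
        apply hq
        field_simp at h
        exact h.symm
      have hd3' : (1 : F) - q a * q b ≠ 0 := by
        rw [sub_ne_zero]
        exact fun h => hq1 a b hab h.symm
      have hd5' : q b - q a ≠ 0 := sub_ne_zero.mpr fun h => hab (hq h.symm)
      rw [hoff a b hab, div_eq_div_iff (mul_ne_zero hd1' hd3') (mul_ne_zero hd5' hd3')]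
      field_simp
    rw [hoff' i j hij, hoff' j i (Ne.symm hij)]
    rw [div_mul_eq_mul_div, div_mul_eq_mul_div, ← neg_div,
      div_eq_div_iff (mul_ne_zero hd5 hd3) (mul_ne_zero hd6 hd4)]
    ring
  -- switch to transpose form of determinant
  rw [← Matrix.det_transpose A, Matrix.det_apply']
  simp only [Matrix.transpose_apply]
  rw [← Finset.sum_filter_add_sum_filter_not Finset.univ
      (fun σ : Equiv.Perm (Fin n) => ∀ c ∈ σ.cycleType, Even c)]
  have hzero : ∑ σ ∈ Finset.univ.filter
      (fun σ : Equiv.Perm (Fin n) => ¬ ∀ c ∈ σ.cycleType, Even c),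
      ((Equiv.Perm.sign σ : ℤ) : F) * ∏ i : Fin n, A i (σ i) = 0 := by
    -- the product-flip lemma
    have prodflip : ∀ (σ : Equiv.Perm (Fin n)) (x : Fin n), σ x ≠ x →
        Odd ((σ.cycleOf x).support.card) →
        ∏ i ∈ (σ.cycleOf x).support, A i (σ⁻¹ i) =
          -∏ i ∈ (σ.cycleOf x).support, A i (σ i) := by
      intro σ x hx hodd
      set c := σ.cycleOf x with hcdef
      set s := c.support with hsdef
      have hcmem : c ∈ σ.cycleFactorsFinset :=
        Equiv.Perm.cycleOf_mem_cycleFactorsFinset_iff.mpr (Equiv.Perm.mem_support.mpr hx)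
      have hinv : ∀ y : Fin n, y ∈ s ↔ σ y ∈ s := fun y =>
        (Equiv.Perm.mem_cycleFactorsFinset_support hcmem y).symm
      have hinv' : ∀ y : Fin n, y ∈ s ↔ σ⁻¹ y ∈ s := by
        intro y
        have h := hinv (σ⁻¹ y)
        rw [Equiv.Perm.apply_inv_self] at h
        exact h.symm
      have hssub : s ⊆ σ.support := Equiv.Perm.support_cycleOf_le σ x
      have hne2 : ∀ i, i ∈ s → i ≠ σ i := fun i hi =>
        Ne.symm (Equiv.Perm.mem_support.mp (hssub hi))
      have hne3 : ∀ i, i ∈ s → σ⁻¹ i ≠ i := by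
        intro i hi h
        exact Equiv.Perm.mem_support.mp (hssub hi) (by conv_lhs => rw [← h, Equiv.Perm.apply_inv_self])
      have reidx : ∀ fn : Fin n → F, ∏ i ∈ s, fn (σ i) = ∏ i ∈ s, fn i := by
        intro fn
        exact Finset.prod_equiv σ hinv (fun i _ => rfl)
      set L := ∏ i ∈ s, A i (σ i) with hL
      set R := ∏ i ∈ s, A (σ i) i with hR
      set C := ∏ i ∈ s, ((1 - q i) * (q i * (1 + q i))) with hC
      have hprodinv : ∏ i ∈ s, A i (σ⁻¹ i) = R := by
        rw [hR]
        have : ∀ i ∈ s, A (σ i) i = (fun j => A j (σ⁻¹ j)) (σ i) := by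
          intro i _
          simp only [Equiv.Perm.inv_apply_self]
        rw [Finset.prod_congr rfl this, reidx (fun j => A j (σ⁻¹ j))]
      have hCsplit : C = (∏ i ∈ s, (1 - q i)) * ((∏ i ∈ s, q i) * (∏ i ∈ s, (1 + q i))) := by
        rw [hC]; simp only [Finset.prod_mul_distrib]
      have key : L * C = -(R * C) := by
        have e1 : ∏ i ∈ s, (A i (σ i) * ((1 - q (σ i)) * (q i * (1 + q i))))
            = ∏ i ∈ s, (-(A (σ i) i * ((1 - q i) * (q (σ i) * (1 + q (σ i)))))) :=
          Finset.prod_congr rfl fun i hi => hskew i (σ i) (hne2 i hi)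
        have e2 : ∏ i ∈ s, (A i (σ i) * ((1 - q (σ i)) * (q i * (1 + q i)))) =
            L * ((∏ i ∈ s, (1 - q i)) * ((∏ i ∈ s, q i) * (∏ i ∈ s, (1 + q i)))) := by
          simp only [Finset.prod_mul_distrib]
          rw [reidx (fun j => 1 - q j)]
        have e3 : ∏ i ∈ s, (-(A (σ i) i * ((1 - q i) * (q (σ i) * (1 + q (σ i))))))
            = -(R * ((∏ i ∈ s, (1 - q i)) * ((∏ i ∈ s, q i) * (∏ i ∈ s, (1 + q i))))) := by
          have hmo : ∀ i ∈ s, (-(A (σ i) i * ((1 - q i) * (q (σ i) * (1 + q (σ i))))))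
              = (-1) * (A (σ i) i * ((1 - q i) * (q (σ i) * (1 + q (σ i))))) := by
            intro i _; ring
          rw [Finset.prod_congr rfl hmo]
          simp only [Finset.prod_mul_distrib, Finset.prod_const]
          rw [Odd.neg_one_pow hodd, reidx (fun j => q j), reidx (fun j => 1 + q j)]
          ring
        rw [hCsplit, ← e2, e1, e3]
      by_cases hCz : C = 0
      · obtain ⟨i, hi, hiz⟩ := Finset.prod_eq_zero_iff.mp (hC ▸ hCz)
        have : q i = 1 ∨ q i = -1 := by
          rcases mul_eq_zero.mp hiz with h | h
          · left; exact (sub_eq_zero.mp h).symm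
          · rcases mul_eq_zero.mp h with h' | h'
            · exact absurd h' (hq0 i)
            · right; exact eq_neg_of_add_eq_zero_right h'
        rcases this with h1 | h1
        · rw [Finset.prod_eq_zero hi (hzero1 i (σ⁻¹ i) (Ne.symm (hne3 i hi)) h1), hL,
            Finset.prod_eq_zero hi (hzero1 i (σ i) (hne2 i hi) h1), neg_zero]
        · have hi1 : σ⁻¹ i ∈ s := (hinv' i).mp hi
          have hi2 : σ i ∈ s := (hinv i).mp hi
          have z1 : A (σ i) (σ⁻¹ (σ i)) = 0 := by
            rw [Equiv.Perm.inv_apply_self]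
            exact hzero2 (σ i) i (Ne.symm (hne2 i hi)) h1
          have z2 : A (σ⁻¹ i) (σ (σ⁻¹ i)) = 0 := by
            rw [Equiv.Perm.apply_inv_self]
            exact hzero2 (σ⁻¹ i) i (hne3 i hi) h1
          rw [Finset.prod_eq_zero hi2 z1, hL, Finset.prod_eq_zero hi1 z2, neg_zero]
      · have hLR : L = -R := by
          have := key
          rw [neg_mul_eq_neg_mul] at this
          exact mul_right_cancel₀ hCz this
        rw [hprodinv, hLR, neg_neg]
    -- the involution
    have hbad : ∀ σ : Equiv.Perm (Fin n), σ ∈ Finset.univ.filter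
        (fun σ : Equiv.Perm (Fin n) => ¬ ∀ c ∈ σ.cycleType, Even c) →
        (badPts σ).Nonempty := fun σ hσ =>
      badPts_nonempty (Finset.mem_filter.mp hσ).2
    refine Finset.sum_involution
      (fun σ hσ => σ * (σ.cycleOf ((badPts σ).min' (hbad σ hσ)))⁻¹ *
        (σ.cycleOf ((badPts σ).min' (hbad σ hσ)))⁻¹) ?_ ?_ ?_ ?_
    · -- cancellation
      intro σ hσ
      set x := (badPts σ).min' (hbad σ hσ) with hxdef
      have hxmem : x ∈ badPts σ := Finset.min'_mem _ _
      obtain ⟨hx, hodd⟩ := mem_badPts.mp hxmem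
      obtain ⟨h1, h2, h3, h4⟩ := flip_lemma σ x hx
      set c := σ.cycleOf x with hcdef
      set s := c.support with hsdef
      set σ' := σ * c⁻¹ * c⁻¹ with hσ'def
      have hsign : Equiv.Perm.sign σ' = Equiv.Perm.sign σ := by
        rw [hσ'def]
        simp only [map_mul, map_inv]
        rw [mul_assoc, ← mul_inv_rev, Int.units_mul_self, inv_one, mul_one]
      have hprod : ∏ i : Fin n, A i (σ' i) = -∏ i : Fin n, A i (σ i) := by
        rw [← Finset.prod_mul_prod_compl s (fun i => A i (σ' i)),
          ← Finset.prod_mul_prod_compl s (fun i => A i (σ i))]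
        have e1 : ∏ i ∈ sᶜ, A i (σ' i) = ∏ i ∈ sᶜ, A i (σ i) :=
          Finset.prod_congr rfl fun i hi => by
            rw [h2 i (Finset.mem_compl.mp hi)]
        have e2 : ∏ i ∈ s, A i (σ' i) = ∏ i ∈ s, A i (σ⁻¹ i) :=
          Finset.prod_congr rfl fun i hi => by rw [h1 i hi]
        rw [e1, e2, prodflip σ x hx hodd]
        ring
      rw [hsign, hprod]
      ring
    · -- no fixed point
      intro σ hσ _ heq
      set x := (badPts σ).min' (hbad σ hσ) with hxdef
      have hxmem : x ∈ badPts σ := Finset.min'_mem _ _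
      obtain ⟨hx, hodd⟩ := mem_badPts.mp hxmem
      set c := σ.cycleOf x with hcdef
      have hcyc : c.IsCycle := Equiv.Perm.isCycle_cycleOf σ hx
      have hcc : c * c = 1 := by
        have h0 : σ * (c⁻¹ * c⁻¹) = σ * 1 := by
          rw [mul_one, ← mul_assoc]; exact heq
        have := mul_left_cancel h0
        calc c * c = (c⁻¹ * c⁻¹)⁻¹ := by rw [mul_inv_rev, inv_inv]
        _ = (1 : Equiv.Perm (Fin n))⁻¹ := by rw [this]
        _ = 1 := inv_one
      have hdvd : orderOf c ∣ 2 := orderOf_dvd_of_pow_eq_one (by rw [pow_two]; exact hcc)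
      rw [hcyc.orderOf] at hdvd
      have hle : c.support.card ≤ 2 := Nat.le_of_dvd two_pos hdvd
      have hge : 2 ≤ c.support.card := hcyc.two_le_card_support
      have : c.support.card = 2 := le_antisymm hle hge
      rw [this] at hodd
      exact (Nat.not_odd_iff_even.mpr (by decide)) hodd
    · -- membership
      intro σ hσ
      set x := (badPts σ).min' (hbad σ hσ) with hxdef
      have hxmem : x ∈ badPts σ := Finset.min'_mem _ _
      obtain ⟨hx, hodd⟩ := mem_badPts.mp hxmem
      obtain ⟨h1, h2, h3, h4⟩ := flip_lemma σ x hx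
      refine Finset.mem_filter.mpr ⟨Finset.mem_univ _, ?_⟩
      intro hall
      exact (Nat.not_odd_iff_even.mpr (hall _ h4)) hodd
    · -- involutive
      intro σ hσ
      set x := (badPts σ).min' (hbad σ hσ) with hxdef
      have hxmem : x ∈ badPts σ := Finset.min'_mem _ _
      obtain ⟨hx, hodd⟩ := mem_badPts.mp hxmem
      obtain ⟨h1, h2, h3, h4⟩ := flip_lemma σ x hx
      set c := σ.cycleOf x with hcdef
      set σ' := σ * c⁻¹ * c⁻¹ with hσ'def
      have hbp : badPts σ' = badPts σ := badPts_flip σ x hx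
      have hxc : x ∈ c.support :=
        Equiv.Perm.mem_support_cycleOf_iff.mpr
          ⟨Equiv.Perm.SameCycle.refl _ _, Equiv.Perm.mem_support.mpr hx⟩
      have hc' : σ'.cycleOf x = c⁻¹ := by
        rw [h3 x, if_pos hxc]
      have key2 : ∀ h' : (badPts σ').Nonempty,
          σ' * (σ'.cycleOf ((badPts σ').min' h'))⁻¹ *
            (σ'.cycleOf ((badPts σ').min' h'))⁻¹ = σ := by
        intro h'
        have hx' : (badPts σ').min' h' = x := min'_congr' hbp h' (hbad σ hσ)
        rw [hx', hc', hσ'def]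
        group
      exact key2 _
  rw [hzero, add_zero]
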